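/- For every integer n ≥ 3, there is a 2-coloring of the edges of K_{3×(n−1)} containing no matching nK_2 in the first color and no cycle C_7 in the second color; hence m_3(nK_2, C_7) ≥ n. (The coloring takes the first color class isomorphic to K_{n−1,n−1} between two of the parts and the second color class to be the complete bipartite graph K_{n−1,2(n−1)} between the third part and the union of the other two.) -/

import Mathlib

open SimpleGraph

/-- The complete multipartite graph `K_{j x t}` with `j` parts, each of size `t`. -/
def multiK (j t : ℕ) : SimpleGraph (Fin j × Fin t) where
  Adj a b := a.1 ≠ b.1
  symm := ⟨fun _ _ h => Ne.symm h⟩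
  loopless := ⟨fun _ h => h rfl⟩

/-- `G` contains a copy of `H`. -/
def Contains {α β : Type*} (G : SimpleGraph α) (H : SimpleGraph β) : Prop :=
  ∃ f : β → α, Function.Injective f ∧ ∀ ⦃a b⦄, H.Adj a b → G.Adj (f a) (f b)

/-- The monochromatic subgraph of `G` in color `i` under the edge-coloring `c`. -/
def colorClass {α : Type*} {k : ℕ} (G : SimpleGraph α) (c : Sym2 α → Fin k) (i : Fin k) :
    SimpleGraph α where
  Adj a b := G.Adj a b ∧ c s(a, b) = i
  symm := ⟨fun _ _ h => ⟨h.1.symm, by rw [Sym2.eq_swap]; exact h.2⟩⟩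
  loopless := ⟨fun a h => G.ne_of_adj h.1 rfl⟩

/-- The stripe `nK₂`: the graph consisting of `n` pairwise disjoint edges. -/
def stripe (n : ℕ) : SimpleGraph (Fin n × Fin 2) where
  Adj a b := a.1 = b.1 ∧ a.2 ≠ b.2
  symm := ⟨fun _ _ h => ⟨h.1.symm, h.2.symm⟩⟩
  loopless := ⟨fun _ h => h.2 rfl⟩

/-- Every 3-coloring of the edges of `K_{j x t}` yields a copy of `K_{1,2}` in color 0,
or of `P₄` in color 1, or of `nK₂` in color 2. -/
def Arrows3 (j t n : ℕ) : Prop :=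
  ∀ c : Sym2 (Fin j × Fin t) → Fin 3,
    Contains (colorClass (multiK j t) c 0) (pathGraph 3) ∨
    Contains (colorClass (multiK j t) c 1) (pathGraph 4) ∨
    Contains (colorClass (multiK j t) c 2) (stripe n)

/-- Every 2-coloring of the edges of `K_{j x t}` yields a copy of `nK₂` in color 0
or of `C₇` in color 1. -/
def ArrowsC7 (j t n : ℕ) : Prop :=
  ∀ c : Sym2 (Fin j × Fin t) → Fin 2,
    Contains (colorClass (multiK j t) c 0) (stripe n) ∨
    Contains (colorClass (multiK j t) c 1) (cycleGraph 7)

def myColor (t : ℕ) : Sym2 (Fin 3 × Fin t) → Fin 2 :=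
  Sym2.lift ⟨fun a b => if a.1 = 2 ∨ b.1 = 2 then 1 else 0, fun a b => by simp [or_comm]⟩

lemma key (t n : ℕ) (ht : t < n) :
    ¬ Contains (colorClass (multiK 3 t) (myColor t) 0) (stripe n) ∧
    ¬ Contains (colorClass (multiK 3 t) (myColor t) 1) (cycleGraph 7) := by
  constructor
  · rintro ⟨f, finj, hf⟩
    -- each stripe edge maps to a color-0 edge
    have hadj : ∀ i : Fin n, (f (i, 0)).1 ≠ (f (i, 1)).1 ∧
        ¬ ((f (i, 0)).1 = 2 ∨ (f (i, 1)).1 = 2) := by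
      intro i
      have h := hf (a := (i, 0)) (b := (i, 1)) ⟨rfl, Fin.zero_ne_one⟩
      refine ⟨h.1, ?_⟩
      have h2 := h.2
      simp only [myColor, Sym2.lift_mk] at h2
      intro hc
      rw [if_pos hc] at h2
      exact absurd h2 (by decide)
    set g : Fin n → Fin 3 × Fin t := fun i => if (f (i, 0)).1 = 0 then f (i, 0) else f (i, 1)
      with hg
    have hg0 : ∀ i, (g i).1 = 0 := by
      intro i
      obtain ⟨hne, hn2⟩ := hadj i
      push_neg at hn2
      by_cases h : (f (i, 0)).1 = 0
      · simp [hg, h]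
      · have : ∀ a b : Fin 3, a ≠ b → a ≠ 2 → b ≠ 2 → a ≠ 0 → b = 0 := by decide
        simp [hg, h, this _ _ hne hn2.1 hn2.2 h]
    have hginj : Function.Injective g := by
      intro i j hij
      simp only [hg] at hij
      split_ifs at hij <;>
        · have := finj hij
          exact (Prod.mk.injEq _ _ _ _ ▸ this).1
    have hinj : Function.Injective (fun i => (g i).2) := by
      intro i j hij
      apply hginj
      exact Prod.ext ((hg0 i).trans (hg0 j).symm) hij
    have := Fintype.card_le_of_injective _ hinj
    simp at this
    omega
  · rintro ⟨f, finj, hf⟩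
    have halt : ∀ i j : Fin 7, (cycleGraph 7).Adj i j →
        (decide ((f i).1 = 2) ≠ decide ((f j).1 = 2)) := by
      intro i j hij
      have h := hf hij
      have h1 := h.1
      have h2 := h.2
      simp only [myColor, Sym2.lift_mk] at h2
      by_cases hc : (f i).1 = 2 ∨ (f j).1 = 2
      · rcases hc with hc | hc
        · have : (f j).1 ≠ 2 := fun h' => h1 (hc.trans h'.symm)
          simp [hc, this]
        · have : (f i).1 ≠ 2 := fun h' => h1 (h'.trans hc.symm)
          simp [hc, this]
      · rw [if_neg hc] at h2
        exact absurd h2 (by decide)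
    have a01 := halt 0 1 (by decide)
    have a12 := halt 1 2 (by decide)
    have a23 := halt 2 3 (by decide)
    have a34 := halt 3 4 (by decide)
    have a45 := halt 4 5 (by decide)
    have a56 := halt 5 6 (by decide)
    have a60 := halt 6 0 (by decide)
    revert a01 a12 a23 a34 a45 a56 a60
    cases decide ((f 0).1 = 2) <;> cases decide ((f 1).1 = 2) <;>
      cases decide ((f 2).1 = 2) <;> cases decide ((f 3).1 = 2) <;>
      cases decide ((f 4).1 = 2) <;> cases decide ((f 5).1 = 2) <;>
      cases decide ((f 6).1 = 2) <;> simp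

theorem stmt12 (n : ℕ) (hn : 3 ≤ n) :
    (∃ c : Sym2 (Fin 3 × Fin (n - 1)) → Fin 2,
      ¬ Contains (colorClass (multiK 3 (n - 1)) c 0) (stripe n) ∧
      ¬ Contains (colorClass (multiK 3 (n - 1)) c 1) (cycleGraph 7)) ∧
    (∀ t : ℕ, 0 < t → ArrowsC7 3 t n → n ≤ t) := by
  refine ⟨⟨myColor (n - 1), (key (n - 1) n (by omega)).1, (key (n - 1) n (by omega)).2⟩, ?_⟩
  intro t _ harr
  by_contra h
  push_neg at h
  obtain ⟨k1, k2⟩ := key t n h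
  rcases harr (myColor t) with hc | hc
  · exact k1 hc
  · exact k2 hc
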